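/- (Combined skew bound) Let â_{i,i−1} > 0 be declared skews along a chain 1,…,n, and let i* ≥ 2 be the index minimizing the skew product â_{k,1} with â_{i*,1} ≤ 1. Suppose time-stamps satisfy parameter consistency τ^{j,l} = â_{j,j−1}·τ^{j−1,r} + b̂_{j,j−1} for 2 ≤ j ≤ n and causality τ^{j,l} ≤ τ^{j,r}. Then Σ_{j=2}^{n} (τ^{j,l} − τ^{j−1,r}) ≤ (â_{i*,1} − 1)·τ^{1,r} + ((â_{n,i*} − 1)/â_{n,i*})·τ^{n,l} + b̂_{n,1}/â_{n,i*}, where b̂_{n,1} := Σ_{j=2}^{n} â_{n,j}·b̂_{j,j−1}. -/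

import Mathlib

lemma chain_id (n : ℕ) (ahat bhat l r : ℕ → ℝ)
    (hcons : ∀ j ∈ Finset.Icc 2 n, l j = ahat j * r (j - 1) + bhat j) :
    ∀ m, 2 ≤ m → m ≤ n →
      l m = (∏ i ∈ Finset.Icc 2 m, ahat i) * r 1
        + (∑ j ∈ Finset.Icc 3 m, (∏ i ∈ Finset.Icc j m, ahat i) * (r (j-1) - l (j-1)))
        + ∑ j ∈ Finset.Icc 2 m, (∏ i ∈ Finset.Icc (j+1) m, ahat i) * bhat j := by
  refine Nat.le_induction ?_ ?_
  · intro h2n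
    have hc := hcons 2 (by simp [Finset.mem_Icc]; omega)
    simp [Finset.Icc_self, show Finset.Icc 3 2 = ∅ from by
      apply Finset.Icc_eq_empty; omega, hc]
  · intro m hm IH hm1
    have hmn : m ≤ n := by omega
    have hc := hcons (m+1) (by simp [Finset.mem_Icc]; omega)
    have h1 : ∀ j ∈ Finset.Icc 3 m,
        (∏ i ∈ Finset.Icc j (m+1), ahat i) * (r (j-1) - l (j-1))
          = ahat (m+1) * ((∏ i ∈ Finset.Icc j m, ahat i) * (r (j-1) - l (j-1))) := by
      intro j hj
      rw [Finset.prod_Icc_succ_top (by simp [Finset.mem_Icc] at hj; omega : j ≤ m+1)]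
      ring
    have h2 : ∀ j ∈ Finset.Icc 2 m,
        (∏ i ∈ Finset.Icc (j+1) (m+1), ahat i) * bhat j
          = ahat (m+1) * ((∏ i ∈ Finset.Icc (j+1) m, ahat i) * bhat j) := by
      intro j hj
      rw [Finset.prod_Icc_succ_top (by simp [Finset.mem_Icc] at hj; omega : j+1 ≤ m+1)]
      ring
    rw [Finset.sum_Icc_succ_top (by omega : 3 ≤ m+1),
        Finset.sum_Icc_succ_top (by omega : 2 ≤ m+1),
        Finset.prod_Icc_succ_top (by omega : 2 ≤ m+1),
        Finset.sum_congr rfl h1, Finset.sum_congr rfl h2,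
        ← Finset.mul_sum, ← Finset.mul_sum,
        show (m+1) - 1 = m from by omega] at *
    have hIH := IH hmn
    rw [Finset.Icc_self, Finset.prod_singleton,
        show Finset.Icc (m+1+1) (m+1) = ∅ from by apply Finset.Icc_eq_empty; omega,
        Finset.prod_empty]
    rw [hc]
    linear_combination (ahat (m+1)) * hIH

lemma chain_tele (l r : ℕ → ℝ) :
    ∀ m, 2 ≤ m →
      (∑ j ∈ Finset.Icc 2 m, (l j - r (j - 1)))
        = l m - r 1 - ∑ j ∈ Finset.Icc 3 m, (r (j-1) - l (j-1)) := by
  refine Nat.le_induction ?_ ?_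
  · simp [Finset.Icc_self, show Finset.Icc 3 2 = ∅ from by apply Finset.Icc_eq_empty; omega]
  · intro m hm IH
    rw [Finset.sum_Icc_succ_top (by omega : 2 ≤ m+1),
        Finset.sum_Icc_succ_top (by omega : 3 ≤ m+1), IH,
        show (m+1) - 1 = m from by omega]
    ring

theorem stmt8 (n : ℕ) (hn : 2 ≤ n) (ahat bhat l r : ℕ → ℝ)
    (hahat : ∀ i ∈ Finset.Icc 2 n, 0 < ahat i)
    (istar : ℕ) (histar : istar ∈ Finset.Icc 2 n)
    (hmin : ∀ k ∈ Finset.Icc 1 n,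
      (∏ i ∈ Finset.Icc 2 istar, ahat i) ≤ ∏ i ∈ Finset.Icc 2 k, ahat i)
    (hle1 : (∏ i ∈ Finset.Icc 2 istar, ahat i) ≤ 1)
    (hcons : ∀ j ∈ Finset.Icc 2 n, l j = ahat j * r (j - 1) + bhat j)
    (hcaus : ∀ j, l j ≤ r j) :
    (∑ j ∈ Finset.Icc 2 n, (l j - r (j - 1)))
      ≤ ((∏ i ∈ Finset.Icc 2 istar, ahat i) - 1) * r 1
        + (((∏ i ∈ Finset.Icc 2 n, ahat i) / (∏ i ∈ Finset.Icc 2 istar, ahat i) - 1)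
            / ((∏ i ∈ Finset.Icc 2 n, ahat i) / (∏ i ∈ Finset.Icc 2 istar, ahat i)))
          * l n
        + (∑ j ∈ Finset.Icc 2 n, (∏ k ∈ Finset.Icc (j + 1) n, ahat k) * bhat j)
            / ((∏ i ∈ Finset.Icc 2 n, ahat i) / (∏ i ∈ Finset.Icc 2 istar, ahat i)) := by
  simp only [Finset.mem_Icc] at histar
  set Ai := (∏ i ∈ Finset.Icc 2 istar, ahat i) with hAid
  set An := (∏ i ∈ Finset.Icc 2 n, ahat i) with hAnd
  set B := (∑ j ∈ Finset.Icc 2 n, (∏ k ∈ Finset.Icc (j + 1) n, ahat k) * bhat j) with hBd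
  set D := (∑ j ∈ Finset.Icc 3 n, (∏ i ∈ Finset.Icc j n, ahat i) * (r (j-1) - l (j-1))) with hDd
  set Dt := (∑ j ∈ Finset.Icc 3 n, (r (j-1) - l (j-1))) with hDtd
  have hAipos : 0 < Ai := Finset.prod_pos (fun i hi => by
    refine hahat i ?_
    simp only [Finset.mem_Icc] at hi ⊢; omega)
  have hAnpos : 0 < An := Finset.prod_pos (fun i hi => hahat i hi)
  have hid := chain_id n ahat bhat l r hcons n (by omega) le_rfl
  have htele := chain_tele l r n hn
  -- key termwise inequality: Ai * D ≤ An * Dt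
  have hkey : Ai * D ≤ An * Dt := by
    rw [Finset.mul_sum, Finset.mul_sum]
    apply Finset.sum_le_sum
    intro j hj
    simp only [Finset.mem_Icc] at hj
    have hd : 0 ≤ r (j-1) - l (j-1) := by linarith [hcaus (j-1)]
    have hsplit : An = (∏ i ∈ Finset.Icc 2 (j-1), ahat i) * ∏ i ∈ Finset.Icc j n, ahat i := by
      rw [hAnd, ← Finset.prod_union (by
        simp only [Finset.disjoint_left, Finset.mem_Icc]
        intro x hx hx2; omega)]
      congr 1
      ext x
      simp only [Finset.mem_union, Finset.mem_Icc]
      omega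
    have hprodpos : 0 < ∏ i ∈ Finset.Icc j n, ahat i := Finset.prod_pos (fun i hi => by
      refine hahat i ?_
      simp only [Finset.mem_Icc] at hi ⊢; omega)
    have hAiLe : Ai ≤ ∏ i ∈ Finset.Icc 2 (j-1), ahat i :=
      hmin (j-1) (by simp only [Finset.mem_Icc]; omega)
    calc Ai * ((∏ i ∈ Finset.Icc j n, ahat i) * (r (j-1) - l (j-1)))
        = (Ai * ∏ i ∈ Finset.Icc j n, ahat i) * (r (j-1) - l (j-1)) := by ring
      _ ≤ ((∏ i ∈ Finset.Icc 2 (j-1), ahat i) * ∏ i ∈ Finset.Icc j n, ahat i)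
            * (r (j-1) - l (j-1)) := by
          apply mul_le_mul_of_nonneg_right _ hd
          exact mul_le_mul_of_nonneg_right hAiLe hprodpos.le
      _ = An * (r (j-1) - l (j-1)) := by rw [← hsplit]
  have hB : B = l n - An * r 1 - D := by rw [hid]; ring
  have hRHS : (Ai - 1) * r 1 + ((An / Ai - 1) / (An / Ai)) * l n + B / (An / Ai)
      = l n - r 1 - (Ai / An) * D := by
    rw [hB]
    field_simp
    ring
  rw [htele, hRHS]
  have : (Ai / An) * D ≤ Dt := by
    rw [div_mul_eq_mul_div, div_le_iff₀ hAnpos, mul_comm Dt An]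
    exact hkey
  linarith
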